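/- Suppose f : [a, b] → ℂ has a convergent improper Riemann integral on the finite interval [a, b]. Then for every s ∈ ℝ the integral F̂(s) = ∫_a^b e^{isx} f(x) dx exists, and F̂(s) = o(s) as |s| → ∞. -/

import Mathlib

open Filter Real Complex Asymptotics MeasureTheory intervalIntegral Topology

lemma expDeriv (s x : ℝ) :
    HasDerivAt (fun x : ℝ => Complex.exp (((s * x : ℝ) : ℂ) * Complex.I))
      ((s : ℂ) * Complex.I * Complex.exp (((s * x : ℝ) : ℂ) * Complex.I)) x := by
  have h1 : HasDerivAt (fun x : ℝ => ((s * x : ℝ) : ℂ) * Complex.I) ((s : ℂ) * Complex.I) x := by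
    have : HasDerivAt (fun x : ℝ => (s * x : ℝ)) s x := by
      simpa using (hasDerivAt_id x).const_mul s
    simpa using (this.ofReal_comp).mul_const Complex.I
  simpa [mul_comm] using h1.cexp

lemma expCont (s : ℝ) :
    Continuous (fun x : ℝ => Complex.exp (((s * x : ℝ) : ℂ) * Complex.I)) := by
  fun_prop

lemma RL (g : ℝ → ℂ) :
    Tendsto (fun s : ℝ => ∫ x : ℝ, Complex.exp (((s * x : ℝ) : ℂ) * Complex.I) * g x)
      (cocompact ℝ) (𝓝 0) := by
  have h := Real.tendsto_integral_exp_smul_cocompact g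
  have hmap : Tendsto (fun s : ℝ => s * (-(2 * π)⁻¹)) (cocompact ℝ) (cocompact ℝ) :=
    (Homeomorph.mulRight₀ (-(2 * π)⁻¹)
      (neg_ne_zero.2 (inv_ne_zero (by positivity)))).map_cocompact.le
  have h2 := h.comp hmap
  refine h2.congr fun s => ?_
  simp only [Function.comp]
  congr 1
  ext v
  rw [Circle.smul_def, Real.fourierChar_apply]
  congr 2
  have hπ : (π : ℂ) ≠ 0 := by exact_mod_cast Real.pi_ne_zero
  push_cast
  field_simp

lemma cancelExp (s : ℝ) (f : ℝ → ℂ) (u v : ℝ)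
    (h : IntervalIntegrable (fun x => Complex.exp (((s * x : ℝ) : ℂ) * Complex.I) * f x)
      MeasureTheory.volume u v) :
    IntervalIntegrable f MeasureTheory.volume u v := by
  have hc : ContinuousOn (fun x : ℝ => Complex.exp (-(((s * x : ℝ) : ℂ) * Complex.I)))
      (Set.uIcc u v) := by fun_prop
  have h2 := h.continuousOn_mul hc
  have heq : (fun x : ℝ => Complex.exp (-(((s * x : ℝ) : ℂ) * Complex.I)) *
      (Complex.exp (((s * x : ℝ) : ℂ) * Complex.I) * f x)) = f := by
    funext x
    rw [← mul_assoc, ← Complex.exp_add, neg_add_cancel, Complex.exp_zero, one_mul]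
  rwa [heq] at h2

theorem stmt6 (a b : ℝ) (hab : a < b) (f F : ℝ → ℂ)
    (hFcont : ContinuousOn F (Set.Icc a b)) (hFa : F a = 0)
    (hF : ∀ x ∈ Set.Ioo a b, HasDerivAt F (f x) x) :
    ∃ Fhat : ℝ → ℂ,
      (∀ s : ℝ, Tendsto
        (fun p : ℝ × ℝ => ∫ x in p.1..p.2, Complex.exp (((s * x : ℝ) : ℂ) * Complex.I) * f x)
        ((nhdsWithin a (Set.Ioi a)) ×ˢ (nhdsWithin b (Set.Iio b))) (nhds (Fhat s))) ∧
      Fhat =o[Filter.cocompact ℝ] (fun s : ℝ => (s : ℂ)) := by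
  set L := (nhdsWithin a (Set.Ioi a)) ×ˢ (nhdsWithin b (Set.Iio b)) with hLdef
  have hev : ∀ᶠ p : ℝ × ℝ in L, p.1 ∈ Set.Ioo a b ∧ p.2 ∈ Set.Ioo a b := by
    have h1 : ∀ᶠ x in nhdsWithin a (Set.Ioi a), x ∈ Set.Ioo a b :=
      Filter.Eventually.and self_mem_nhdsWithin
        ((eventually_lt_nhds hab).filter_mono nhdsWithin_le_nhds)
    have h2 : ∀ᶠ x in nhdsWithin b (Set.Iio b), x ∈ Set.Ioo a b :=
      Filter.Eventually.and ((eventually_gt_nhds hab).filter_mono nhdsWithin_le_nhds)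
        self_mem_nhdsWithin
    exact h1.prod_mk h2
  have tfst : Tendsto (fun p : ℝ × ℝ => p.1) L (nhdsWithin a (Set.Icc a b)) := by
    apply tendsto_nhdsWithin_of_tendsto_nhds_of_eventually_within
    · exact tendsto_fst.mono_right nhdsWithin_le_nhds
    · exact hev.mono fun p hp => Set.Ioo_subset_Icc_self hp.1
  have tsnd : Tendsto (fun p : ℝ × ℝ => p.2) L (nhdsWithin b (Set.Icc a b)) := by
    apply tendsto_nhdsWithin_of_tendsto_nhds_of_eventually_within
    · exact tendsto_snd.mono_right nhdsWithin_le_nhds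
    · exact hev.mono fun p hp => Set.Ioo_subset_Icc_self hp.2
  have hamem : a ∈ Set.Icc a b := ⟨le_refl a, hab.le⟩
  have hbmem : b ∈ Set.Icc a b := ⟨hab.le, le_refl b⟩
  by_cases hint : ∀ a' b' : ℝ, a < a' → a' ≤ b' → b' < b →
      IntervalIntegrable f MeasureTheory.volume a' b'
  · -- main case
    have hIoo : ∀ u v : ℝ, u ∈ Set.Ioo a b → v ∈ Set.Ioo a b →
        IntervalIntegrable f MeasureTheory.volume u v := by
      intro u v hu hv
      rcases le_total u v with h | h
      · exact hint u v hu.1 h hv.2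
      · exact (hint v u hv.1 h hu.2).symm
    refine ⟨fun s => Complex.exp (((s * b : ℝ) : ℂ) * Complex.I) * F b -
      ∫ x in a..b, ((s : ℂ) * Complex.I * Complex.exp (((s * x : ℝ) : ℂ) * Complex.I)) * F x,
      ?_, ?_⟩
    · intro s
      set G : ℝ → ℂ :=
        fun x => (s : ℂ) * Complex.I * Complex.exp (((s * x : ℝ) : ℂ) * Complex.I) * F x with hG
      have hGcont : ContinuousOn G (Set.Icc a b) :=
        (continuousOn_const.mul (expCont s).continuousOn).mul hFcont
      have hGI : IntervalIntegrable G MeasureTheory.volume a b := by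
        rw [intervalIntegrable_iff_integrableOn_Icc_of_le hab.le]
        exact hGcont.integrableOn_Icc
      set P : ℝ → ℂ := (fun y => ∫ t in a..y, G t) with hPdef
      have hPcont : ContinuousOn P (Set.Icc a b) := by
        have := intervalIntegral.continuousOn_primitive_interval
          (f := G) (μ := MeasureTheory.volume) (a := a) (b := b)
          (by rw [Set.uIcc_of_le hab.le]; exact hGcont.integrableOn_Icc)
        rwa [Set.uIcc_of_le hab.le] at this
      have key : ∀ᶠ p : ℝ × ℝ in L,
          (Complex.exp (((s * p.2 : ℝ) : ℂ) * Complex.I) * F p.2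
              - Complex.exp (((s * p.1 : ℝ) : ℂ) * Complex.I) * F p.1
              - (P p.2 - P p.1))
            = ∫ x in p.1..p.2, Complex.exp (((s * x : ℝ) : ℂ) * Complex.I) * f x := by
        filter_upwards [hev] with p hp
        obtain ⟨hp1, hp2⟩ := hp
        have hsub : Set.uIcc p.1 p.2 ⊆ Set.Ioo a b :=
          Set.ordConnected_Ioo.uIcc_subset hp1 hp2
        have hparts := intervalIntegral.integral_mul_deriv_eq_deriv_mul
          (a := p.1) (b := p.2)
          (u := fun x : ℝ => Complex.exp (((s * x : ℝ) : ℂ) * Complex.I)) (v := F)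
          (u' := fun x : ℝ => (s : ℂ) * Complex.I * Complex.exp (((s * x : ℝ) : ℂ) * Complex.I))
          (v' := f)
          (fun x _ => expDeriv s x)
          (fun x hx => hF x (hsub hx))
          (((continuous_const.mul (expCont s))).intervalIntegrable _ _)
          (hIoo p.1 p.2 hp1 hp2)
        have h1s : Set.uIcc a p.1 ⊆ Set.uIcc a b := by
          rw [Set.uIcc_of_le hab.le]
          exact Set.uIcc_subset_Icc hamem (Set.Ioo_subset_Icc_self hp1)
        have h2s : Set.uIcc p.1 p.2 ⊆ Set.uIcc a b := by
          rw [Set.uIcc_of_le hab.le]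
          exact Set.uIcc_subset_Icc (Set.Ioo_subset_Icc_self hp1) (Set.Ioo_subset_Icc_self hp2)
        have hadj := intervalIntegral.integral_add_adjacent_intervals
          (a := a) (b := p.1) (c := p.2) (f := G) (μ := MeasureTheory.volume)
          (hGI.mono_set h1s) (hGI.mono_set h2s)
        have hPP : (∫ x in p.1..p.2, G x) = P p.2 - P p.1 := eq_sub_of_add_eq' hadj
        rw [hparts, ← hPP]
      have hE1 : Tendsto (fun p : ℝ × ℝ => Complex.exp (((s * p.1 : ℝ) : ℂ) * Complex.I)) L
          (𝓝 (Complex.exp (((s * a : ℝ) : ℂ) * Complex.I))) :=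
        ((expCont s).tendsto a).comp (tfst.mono_right nhdsWithin_le_nhds)
      have hE2 : Tendsto (fun p : ℝ × ℝ => Complex.exp (((s * p.2 : ℝ) : ℂ) * Complex.I)) L
          (𝓝 (Complex.exp (((s * b : ℝ) : ℂ) * Complex.I))) :=
        ((expCont s).tendsto b).comp (tsnd.mono_right nhdsWithin_le_nhds)
      have hF1 : Tendsto (fun p : ℝ × ℝ => F p.1) L (𝓝 (F a)) :=
        Filter.Tendsto.comp (hFcont a hamem) tfst
      have hF2 : Tendsto (fun p : ℝ × ℝ => F p.2) L (𝓝 (F b)) :=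
        Filter.Tendsto.comp (hFcont b hbmem) tsnd
      have hP1 : Tendsto (fun p : ℝ × ℝ => P p.1) L (𝓝 (P a)) :=
        Filter.Tendsto.comp (hPcont a hamem) tfst
      have hP2 : Tendsto (fun p : ℝ × ℝ => P p.2) L (𝓝 (P b)) :=
        Filter.Tendsto.comp (hPcont b hbmem) tsnd
      have final := ((hE2.mul hF2).sub (hE1.mul hF1)).sub (hP2.sub hP1)
      have hval : Complex.exp (((s * b : ℝ) : ℂ) * Complex.I) * F b
            - Complex.exp (((s * a : ℝ) : ℂ) * Complex.I) * F a - (P b - P a)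
          = Complex.exp (((s * b : ℝ) : ℂ) * Complex.I) * F b -
            ∫ x in a..b, ((s : ℂ) * Complex.I * Complex.exp (((s * x : ℝ) : ℂ) * Complex.I)) * F x := by
        have hPa : P a = 0 := intervalIntegral.integral_same
        have hPb : P b = ∫ x in a..b,
            ((s : ℂ) * Complex.I * Complex.exp (((s * x : ℝ) : ℂ) * Complex.I)) * F x := rfl
        rw [hFa, hPa, hPb]
        ring
      rw [hval] at final
      exact Tendsto.congr' key final
    · -- the little-o estimate
      have hfac : ∀ s : ℝ,
          (∫ x in a..b, ((s : ℂ) * Complex.I * Complex.exp (((s * x : ℝ) : ℂ) * Complex.I)) * F x)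
            = (s : ℂ) * (Complex.I *
              ∫ x in a..b, Complex.exp (((s * x : ℝ) : ℂ) * Complex.I) * F x) := by
        intro s
        rw [← intervalIntegral.integral_const_mul, ← intervalIntegral.integral_const_mul]
        congr 1
        funext x
        ring
      have hA : (fun s : ℝ => Complex.exp (((s * b : ℝ) : ℂ) * Complex.I) * F b)
          =o[Filter.cocompact ℝ] (fun s : ℝ => (s : ℂ)) := by
        rw [isLittleO_iff]
        intro c hc
        filter_upwards [tendsto_norm_cocompact_atTop.eventually_ge_atTop (‖F b‖ / c)] with s hs
        have h1 : ‖Complex.exp (((s * b : ℝ) : ℂ) * Complex.I) * F b‖ = ‖F b‖ := by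
          rw [norm_mul, Complex.norm_exp_ofReal_mul_I, one_mul]
        have h2 : ‖((s : ℝ) : ℂ)‖ = ‖s‖ := Complex.norm_real s
        rw [h1, h2]
        calc ‖F b‖ ≤ (‖F b‖ / c) * c := by rw [div_mul_cancel₀]; exact hc.ne'
          _ ≤ ‖s‖ * c := by nlinarith
          _ = c * ‖s‖ := mul_comm _ _
      have hJ : Tendsto
          (fun s : ℝ => ∫ x in a..b, Complex.exp (((s * x : ℝ) : ℂ) * Complex.I) * F x)
          (cocompact ℝ) (𝓝 0) := by
        have := RL ((Set.Ioc a b).indicator F)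
        refine this.congr fun s => ?_
        rw [intervalIntegral.integral_of_le hab.le,
          ← MeasureTheory.integral_indicator measurableSet_Ioc]
        congr 1
        funext x
        rw [Set.indicator_mul_right]
      have hBo : (fun s : ℝ => Complex.I *
            ∫ x in a..b, Complex.exp (((s * x : ℝ) : ℂ) * Complex.I) * F x)
          =o[Filter.cocompact ℝ] (fun _ : ℝ => (1 : ℂ)) := by
        rw [isLittleO_one_iff]
        simpa using hJ.const_mul Complex.I
      have hB := (isBigO_refl (fun s : ℝ => (s : ℂ)) (Filter.cocompact ℝ)).mul_isLittleO hBo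
      simp only [mul_one] at hB
      have := hA.sub hB
      refine this.congr_left fun s => ?_
      rw [hfac]
  · -- degenerate case
    push_neg at hint
    obtain ⟨a', b', ha', hab', hb', hni⟩ := hint
    refine ⟨0, ?_, by exact isLittleO_zero (fun s : ℝ => (s : ℂ)) (Filter.cocompact ℝ)⟩
    intro s
    have h1 : ∀ᶠ x in nhdsWithin a (Set.Ioi a), x < a' :=
      (eventually_lt_nhds ha').filter_mono nhdsWithin_le_nhds
    have h2 : ∀ᶠ x in nhdsWithin b (Set.Iio b), b' < x :=
      (eventually_gt_nhds hb').filter_mono nhdsWithin_le_nhds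
    have hzero : ∀ᶠ p : ℝ × ℝ in L,
        (0 : ℂ) = ∫ x in p.1..p.2, Complex.exp (((s * x : ℝ) : ℂ) * Complex.I) * f x := by
      filter_upwards [h1.prod_mk h2] with p hp
      refine (intervalIntegral.integral_undef fun H => hni ?_).symm
      have hle : p.1 ≤ p.2 := le_of_lt (lt_of_lt_of_le hp.1 (hab'.trans hp.2.le))
      have hss : Set.uIcc a' b' ⊆ Set.uIcc p.1 p.2 := by
        rw [Set.uIcc_of_le hab', Set.uIcc_of_le hle]
        exact Set.Icc_subset_Icc hp.1.le hp.2.le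
      exact cancelExp s f a' b' (H.mono_set hss)
    have : Tendsto (fun _ : ℝ × ℝ => (0 : ℂ)) L (𝓝 ((0 : ℝ → ℂ) s)) := tendsto_const_nhds
    exact Tendsto.congr' hzero this
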